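/- arXiv:2403.02843 — 2 statements merged into one kernel-verified Lean document; each statement's English description precedes it below -/
import Mathlib

section
/- Every open convex set C in a locally convex space X of real dimension at least two, equipped with the uniformity induced from X, has property (P). -/
open Filter Topology Set Pointwise NNReal

set_option linter.unusedSectionVars false
set_option maxHeartbeats 1000000

namespace PropP

variable {X : Type*} [AddCommGroup X] [Module ℝ X] [TopologicalSpace X]
  [IsTopologicalAddGroup X] [ContinuousSMul ℝ X]

/-- A convenient bundle of properties for the convex symmetric open neighborhoods of `0`. -/
structure GoodSet (N : Set X) : Prop where
  op : IsOpen N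
  conv : Convex ℝ N
  zero : (0:X) ∈ N
  symm : ∀ x ∈ N, -x ∈ N

theorem GoodSet.nhds {N : Set X} (hN : GoodSet N) : N ∈ 𝓝 (0:X) := hN.op.mem_nhds hN.zero

theorem GoodSet.abs {N : Set X} (hN : GoodSet N) : Absorbent ℝ N := absorbent_nhds_zero hN.nhds

theorem smul_mono_set {N : Set X} (hNc : Convex ℝ N) (hN0 : (0:X) ∈ N) {p q : ℝ}
    (hp : 0 ≤ p) (hpq : p ≤ q) : p • N ⊆ q • N := by
  rcases eq_or_lt_of_le (hp.trans hpq) with hq | hq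
  · have : p = 0 := le_antisymm (hpq.trans hq.symm.le) hp
    rw [this, ← hq]
  · rintro x ⟨n, hn, rfl⟩
    refine ⟨(p/q) • n, ?_, ?_⟩
    · have h1 : (0:ℝ) ≤ p/q := div_nonneg hp hq.le
      have h2 : p/q ≤ 1 := (div_le_one hq).mpr hpq
      have := hNc hn hN0 (a := p/q) (b := 1 - p/q) h1 (by linarith) (by ring)
      simpa using this
    · show q • ((p/q) • n) = p • n
      rw [smul_smul]
      congr 1
      field_simp

theorem mem_one_smul {N : Set X} {x : X} (hx : x ∈ N) : x ∈ (1:ℝ) • N := by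
  rw [one_smul]; exact hx

theorem add_mem_smul {N : Set X} (hNc : Convex ℝ N) {p q : ℝ} (hp : 0 ≤ p) (hq : 0 ≤ q)
    {x y : X} (hx : x ∈ p • N) (hy : y ∈ q • N) : x + y ∈ (p + q) • N := by
  rw [hNc.add_smul hp hq]; exact add_mem_add hx hy

theorem neg_mem_smul {N : Set X} (hNs : ∀ x ∈ N, -x ∈ N) {p : ℝ} {x : X}
    (hx : x ∈ p • N) : -x ∈ p • N := by
  obtain ⟨n, hn, rfl⟩ := hx
  exact ⟨-n, hNs n hn, by module⟩

theorem smul_unit_mem {N : Set X} (hNc : Convex ℝ N) (hN0 : (0:X) ∈ N) {v : X}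
    (hv : v ∈ N) {t : ℝ} (ht : t ∈ Icc (0:ℝ) 1) : t • v ∈ N := by
  have := hNc hv hN0 (a := t) (b := 1 - t) ht.1 (by linarith [ht.2]) (by ring)
  simpa using this

theorem continuous_of_gaugeLip {N : Set X} (hN : N ∈ 𝓝 (0:X)) {f : X → ℝ} {c : ℝ} (hc : 0 < c)
    (hf : ∀ x y, |f x - f y| ≤ c * gauge N (x - y)) : Continuous f := by
  rw [continuous_iff_continuousAt]
  intro x₀
  rw [ContinuousAt, Metric.tendsto_nhds]
  intro ε hε
  set r : ℝ := ε / (2*c) with hr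
  have hrpos : (0:ℝ) < r := by positivity
  have hmem : {x : X | x - x₀ ∈ r • N} ∈ 𝓝 x₀ := by
    have h1 : r • N ∈ 𝓝 (0:X) := (set_smul_mem_nhds_zero_iff (ne_of_gt hrpos)).mpr hN
    have h2 : Tendsto (fun x : X => x - x₀) (𝓝 x₀) (𝓝 (0:X)) := by
      have := (continuous_id.sub (continuous_const (y := x₀))).tendsto x₀
      simpa [Pi.sub_def] using this
    exact h2 h1
  filter_upwards [hmem] with x hx
  have h3 : gauge N (x - x₀) ≤ r := gauge_le_of_mem hrpos.le hx
  have h4 := hf x x₀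
  rw [Real.dist_eq]
  have h5 : c * gauge N (x - x₀) ≤ c * r := by nlinarith
  have hlt : c * r = ε/2 := by
    rw [hr]
    field_simp
  linarith

theorem gauge_smul_abs {N : Set X} (hs : ∀ x ∈ N, -x ∈ N) (r : ℝ) (v : X) :
    gauge N (r • v) = |r| * gauge N v := by
  rcases le_total 0 r with h | h
  · rw [gauge_smul_of_nonneg h, abs_of_nonneg h, smul_eq_mul]
  · have h2 : r • v = -((-r) • v) := by module
    rw [h2, gauge_neg hs, gauge_smul_of_nonneg (neg_nonneg.mpr h), abs_of_nonpos h, smul_eq_mul]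

theorem gauge_sub_abs_le {N : Set X} (hN : GoodSet N) (u u' : X) :
    |gauge N u - gauge N u'| ≤ gauge N (u - u') := by
  have h1 : gauge N u ≤ gauge N (u - u') + gauge N u' := by
    have := gauge_add_le hN.conv hN.abs (u - u') u'
    simpa using this
  have h2 : gauge N u' ≤ gauge N (u' - u) + gauge N u := by
    have := gauge_add_le hN.conv hN.abs (u' - u) u
    simpa using this
  have h3 : gauge N (u' - u) = gauge N (u - u') := by
    rw [← neg_sub u u', gauge_neg hN.symm]
  rw [abs_sub_le_iff]
  constructor <;> linarith

noncomputable def lamb (N : Set X) (a : X) (x : X) : ℝ := max 0 (1 - gauge N (x - a))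

theorem lamb_mem_Icc {N : Set X} (a x : X) : lamb N a x ∈ Icc (0:ℝ) 1 := by
  constructor
  · exact le_max_left _ _
  · apply max_le (by norm_num)
    have := gauge_nonneg (s := N) (x - a)
    linarith

theorem lamb_lip {N : Set X} (hN : GoodSet N) (a x y : X) :
    |lamb N a x - lamb N a y| ≤ gauge N (x - y) := by
  have h1 : |lamb N a x - lamb N a y| ≤ |(1 - gauge N (x - a)) - (1 - gauge N (y - a))| := by
    rw [lamb, lamb, max_comm 0 _, max_comm 0 _]
    exact abs_max_sub_max_le_abs _ _ _
  have h2 : |(1 - gauge N (x - a)) - (1 - gauge N (y - a))| = |gauge N (y - a) - gauge N (x - a)| := by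
    ring_nf
  have h3 := gauge_sub_abs_le hN (y - a) (x - a)
  have h4 : (y - a) - (x - a) = y - x := by abel
  have h5 : gauge N (y - x) = gauge N (x - y) := by rw [← neg_sub x y, gauge_neg hN.symm]
  rw [h2] at h1
  rw [h4, h5] at h3
  linarith

theorem lamb_eq_zero {N : Set X} (hN : GoodSet N) {a x : X} (h : x - a ∉ N) :
    lamb N a x = 0 := by
  have h1 : ¬ gauge N (x - a) < 1 := by
    intro hlt
    exact h (gauge_lt_one_subset_self hN.conv hN.zero hN.abs hlt)
  rw [lamb, max_eq_left]
  push_neg at h1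
  linarith

theorem lamb_pos_mem {N : Set X} (hN : GoodSet N) {a x : X} (h : lamb N a x ≠ 0) :
    x - a ∈ N := by
  by_contra hmem
  exact h (lamb_eq_zero hN hmem)

theorem lamb_center {N : Set X} (a : X) : lamb N a a = 1 := by
  rw [lamb, sub_self, gauge_zero]
  norm_num


section Bump

variable {N : Set X} (hN : GoodSet N) (a v : X) (hv : gauge N v ≤ 1/2)

include hN hv

theorem bump_contr (y : X) :
    ContractingWith (1/2 : ℝ≥0) (fun t : ℝ => lamb N a (y - t • v)) := by
  constructor
  · rw [← NNReal.coe_lt_coe]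
    norm_num
  · apply LipschitzWith.of_dist_le_mul
    intro t s
    rw [Real.dist_eq, Real.dist_eq]
    have h1 : |lamb N a (y - t • v) - lamb N a (y - s • v)| ≤ gauge N ((y - t • v) - (y - s • v)) :=
      lamb_lip hN a _ _
    have h2 : (y - t • v) - (y - s • v) = (s - t) • v := by module
    rw [h2] at h1
    rw [gauge_smul_abs hN.symm] at h1
    have h3 : |s - t| * gauge N v ≤ |s - t| * (1/2) :=
      mul_le_mul_of_nonneg_left hv (abs_nonneg _)
    have h4 : ((1/2 : ℝ≥0) : ℝ) = 1/2 := by norm_num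
    rw [h4, abs_sub_comm s t] at *
    linarith

noncomputable def bumpG (y : X) : ℝ :=
  ContractingWith.fixedPoint _ (bump_contr hN a v hv y)

theorem bumpG_fix (y : X) : lamb N a (y - bumpG hN a v hv y • v) = bumpG hN a v hv y :=
  (bump_contr hN a v hv y).fixedPoint_isFixedPt

theorem bumpG_unique {y : X} {t : ℝ} (ht : lamb N a (y - t • v) = t) :
    t = bumpG hN a v hv y :=
  (bump_contr hN a v hv y).fixedPoint_unique ht

theorem bumpG_mem_Icc (y : X) : bumpG hN a v hv y ∈ Icc (0:ℝ) 1 := by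
  rw [← bumpG_fix hN a v hv y]
  exact lamb_mem_Icc a _

theorem bumpG_lip (y y' : X) :
    |bumpG hN a v hv y - bumpG hN a v hv y'| ≤ 2 * gauge N (y - y') := by
  set g := bumpG hN a v hv
  have e1 : lamb N a (y - g y • v) = g y := bumpG_fix hN a v hv y
  have e2 : lamb N a (y' - g y' • v) = g y' := bumpG_fix hN a v hv y'
  have h1 : |lamb N a (y - g y • v) - lamb N a (y - g y' • v)| ≤
      gauge N ((y - g y • v) - (y - g y' • v)) := lamb_lip hN a _ _
  have h2 : (y - g y • v) - (y - g y' • v) = (g y' - g y) • v := by module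
  rw [h2, gauge_smul_abs hN.symm] at h1
  have h3 : |g y' - g y| * gauge N v ≤ |g y' - g y| * (1/2) :=
    mul_le_mul_of_nonneg_left hv (abs_nonneg _)
  have h4 : |lamb N a (y - g y' • v) - lamb N a (y' - g y' • v)| ≤
      gauge N ((y - g y' • v) - (y' - g y' • v)) := lamb_lip hN a _ _
  have h5 : (y - g y' • v) - (y' - g y' • v) = y - y' := by module
  rw [h5] at h4
  have h6 : |g y - g y'| ≤ |lamb N a (y - g y • v) - lamb N a (y - g y' • v)| +
      |lamb N a (y - g y' • v) - lamb N a (y' - g y' • v)| := by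
    have hx : g y - g y' = (lamb N a (y - g y • v) - lamb N a (y - g y' • v)) +
        (lamb N a (y - g y' • v) - lamb N a (y' - g y' • v)) := by
      rw [e1, e2]; ring
    calc |g y - g y'| = _ := by rw [hx]
      _ ≤ _ := abs_add_le _ _
  rw [abs_sub_comm (g y') (g y)] at h1 h3
  linarith

noncomputable def bumpHomeo : X ≃ₜ X where
  toFun x := x + lamb N a x • v
  invFun y := y - bumpG hN a v hv y • v
  left_inv x := by
    have h1 : lamb N a ((x + lamb N a x • v) - lamb N a x • v) = lamb N a x := by
      rw [add_sub_cancel_right]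
    have h2 := bumpG_unique hN a v hv h1
    show x + lamb N a x • v - bumpG hN a v hv (x + lamb N a x • v) • v = x
    rw [← h2, add_sub_cancel_right]
  right_inv y := by
    have h1 := bumpG_fix hN a v hv y
    show (y - bumpG hN a v hv y • v) + lamb N a (y - bumpG hN a v hv y • v) • v = y
    rw [h1, sub_add_cancel]
  continuous_toFun := by
    have hl : Continuous (lamb N a) := by
      apply continuous_of_gaugeLip hN.nhds one_pos
      intro x y
      rw [one_mul]
      exact lamb_lip hN a x y
    exact continuous_id.add (hl.smul continuous_const)
  continuous_invFun := by
    have hg : Continuous (bumpG hN a v hv) := by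
      apply continuous_of_gaugeLip hN.nhds two_pos
      intro x y
      exact bumpG_lip hN a v hv x y
    exact continuous_id.sub (hg.smul continuous_const)

theorem bumpHomeo_apply (x : X) : bumpHomeo hN a v hv x = x + lamb N a x • v := rfl

theorem bumpHomeo_symm_apply (y : X) :
    (bumpHomeo hN a v hv).symm y = y - bumpG hN a v hv y • v := rfl

theorem bumpHomeo_center : bumpHomeo hN a v hv a = a + v := by
  rw [bumpHomeo_apply, lamb_center, one_smul]

theorem bumpHomeo_fix {x : X} (h : x - a ∉ N) : bumpHomeo hN a v hv x = x := by
  rw [bumpHomeo_apply, lamb_eq_zero hN h, zero_smul, add_zero]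

theorem bumpHomeo_disp (x : X) :
    ∃ t ∈ Icc (0:ℝ) 1, bumpHomeo hN a v hv x - x = t • v := by
  refine ⟨lamb N a x, lamb_mem_Icc a x, ?_⟩
  rw [bumpHomeo_apply, add_sub_cancel_left]

theorem v_mem_N : v ∈ N := by
  apply gauge_lt_one_subset_self hN.conv hN.zero hN.abs
  show gauge N v < 1
  linarith

theorem bumpHomeo_moved {x : X} (h : x - a ∈ N) :
    bumpHomeo hN a v hv x - a ∈ (2:ℝ) • N := by
  have h1 : bumpHomeo hN a v hv x - a = (x - a) + lamb N a x • v := by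
    rw [bumpHomeo_apply]; abel
  rw [h1]
  have h2 : lamb N a x • v ∈ N := smul_unit_mem hN.conv hN.zero (v_mem_N hN v hv) (lamb_mem_Icc a x)
  have := add_mem_smul hN.conv (zero_le_one) (zero_le_one) (mem_one_smul h) (mem_one_smul h2)
  norm_num at this
  exact this

theorem bumpHomeo_symm_cases (y : X) :
    (bumpHomeo hN a v hv).symm y = y ∨ ((bumpHomeo hN a v hv).symm y - a ∈ N) := by
  by_cases h : bumpG hN a v hv y = 0
  · left
    rw [bumpHomeo_symm_apply, h, zero_smul, sub_zero]
  · right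
    apply lamb_pos_mem hN
    rw [bumpHomeo_symm_apply]
    rw [bumpG_fix hN a v hv y]
    exact h

theorem bumpHomeo_C {C : Set X} (hsub : ∀ z, z - a ∈ (2:ℝ) • N → z ∈ C) (x : X) :
    x ∈ C ↔ bumpHomeo hN a v hv x ∈ C := by
  constructor
  · intro hx
    by_cases h : x - a ∈ N
    · exact hsub _ (bumpHomeo_moved hN a v hv h)
    · rw [bumpHomeo_fix hN a v hv h]; exact hx
  · intro hx
    rcases bumpHomeo_symm_cases hN a v hv (bumpHomeo hN a v hv x) with h | h
    · rw [Homeomorph.symm_apply_apply] at h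
      rw [h]; exact hx
    · rw [Homeomorph.symm_apply_apply] at h
      apply hsub
      exact smul_mono_set hN.conv hN.zero zero_le_one one_le_two (mem_one_smul h)

end Bump


section Comp

noncomputable def iterComp (f : ℕ → X ≃ₜ X) : ℕ → (X ≃ₜ X)
  | 0 => Homeomorph.refl X
  | n+1 => (iterComp f n).trans (f n)

theorem iterComp_succ_apply (f : ℕ → X ≃ₜ X) (n : ℕ) (x : X) :
    iterComp f (n+1) x = f n (iterComp f n x) := rfl

theorem iterComp_zero_apply (f : ℕ → X ≃ₜ X) (x : X) : iterComp f 0 x = x := rfl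

theorem iterComp_fix (f : ℕ → X ≃ₜ X) (A S : ℕ → Set X) (k : ℕ)
    (hfix : ∀ j < k, ∀ x, x ∉ A j → f j x = x)
    (hmap : ∀ j < k, ∀ x ∈ A j, f j x ∈ S j)
    (hAS : ∀ j < k, A j ⊆ S j)
    (hdisj : ∀ i < k, ∀ j < k, i ≠ j → Disjoint (S i) (S j)) :
    (∀ x, (∀ j < k, x ∉ A j) → iterComp f k x = x) ∧
    (∀ j < k, ∀ x ∈ A j, iterComp f k x = f j x) := by
  induction k with
  | zero => exact ⟨fun x _ => rfl, fun j hj => absurd hj (Nat.not_lt_zero j)⟩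
  | succ n ih =>
    obtain ⟨ih1, ih2⟩ := ih
      (fun j hj => hfix j (hj.trans n.lt_succ_self))
      (fun j hj => hmap j (hj.trans n.lt_succ_self))
      (fun j hj => hAS j (hj.trans n.lt_succ_self))
      (fun i hi j hj hij => hdisj i (hi.trans n.lt_succ_self) j (hj.trans n.lt_succ_self) hij)
    constructor
    · intro x hx
      rw [iterComp_succ_apply, ih1 x (fun j hj => hx j (hj.trans n.lt_succ_self))]
      exact hfix n n.lt_succ_self x (hx n n.lt_succ_self)
    · intro j hj x hx
      rcases Nat.lt_succ_iff_lt_or_eq.mp hj with hj' | rfl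
      · rw [iterComp_succ_apply, ih2 j hj' x hx]
        have h1 : f j x ∈ S j := hmap j (hj'.trans n.lt_succ_self) x hx
        have h2 : f j x ∉ A n := by
          intro hmem
          have h3 : f j x ∈ S n := hAS n n.lt_succ_self hmem
          exact Set.disjoint_left.mp (hdisj j (hj'.trans n.lt_succ_self) n n.lt_succ_self
            (Nat.ne_of_lt hj')) h1 h3
        exact hfix n n.lt_succ_self _ h2
      · have hxnot : ∀ i < j, x ∉ A i := by
          intro i hi hmem
          have h1 : x ∈ S i := hAS i (hi.trans j.lt_succ_self) hmem
          have h2 : x ∈ S j := hAS j j.lt_succ_self hx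
          exact Set.disjoint_left.mp (hdisj i (hi.trans j.lt_succ_self) j j.lt_succ_self
            (Nat.ne_of_lt hi)) h1 h2
        rw [iterComp_succ_apply, ih1 x hxnot]

theorem iterComp_track (f : ℕ → X ≃ₜ X) (T : ℕ) (γ : ℕ → X)
    (hstep : ∀ m < T, f m (γ m) = γ (m+1)) : iterComp f T (γ 0) = γ T := by
  induction T with
  | zero => rfl
  | succ n ih =>
    rw [iterComp_succ_apply, ih (fun m hm => hstep m (hm.trans n.lt_succ_self))]
    exact hstep n n.lt_succ_self

theorem iterComp_disp (f : ℕ → X ≃ₜ X) (W : Set X) (hW : Convex ℝ W) (h0 : (0:X) ∈ W)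
    (T : ℕ) (c : ℝ) (hc : 0 ≤ c)
    (hstep : ∀ m < T, ∀ x, f m x - x ∈ c • W) :
    ∀ x, iterComp f T x - x ∈ ((T:ℝ) * c) • W := by
  induction T with
  | zero =>
    intro x
    rw [iterComp_zero_apply, sub_self]
    refine ⟨0, h0, by simp⟩
  | succ n ih =>
    intro x
    have h1 := ih (fun m hm => hstep m (hm.trans n.lt_succ_self)) x
    have h2 := hstep n n.lt_succ_self (iterComp f n x)
    have h3 : iterComp f (n+1) x - x =
        (f n (iterComp f n x) - iterComp f n x) + (iterComp f n x - x) := by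
      rw [iterComp_succ_apply]; abel
    rw [h3]
    have h4 := add_mem_smul hW hc (by positivity) h2 h1
    have h5 : c + (n:ℝ) * c = ((n:ℕ)+1 : ℝ) * c := by ring
    rw [h5] at h4
    have h6 : (((n:ℕ)+1 : ℕ) : ℝ) = ((n:ℕ)+1 : ℝ) := by push_cast; ring
    rw [h6]
    exact h4

theorem iterComp_invC (f : ℕ → X ≃ₜ X) (k : ℕ) (C : Set X)
    (hf : ∀ j < k, ∀ x, x ∈ C ↔ f j x ∈ C) : ∀ x, x ∈ C ↔ iterComp f k x ∈ C := by
  induction k with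
  | zero => intro x; rfl
  | succ n ih =>
    intro x
    rw [iterComp_succ_apply]
    exact (ih (fun j hj => hf j (hj.trans n.lt_succ_self)) x).trans
      (hf n n.lt_succ_self _)

end Comp

/-- Restrict a homeomorphism of `X` preserving `C` to a homeomorphism of `C`. -/
def restrictHomeo {C : Set X} (e : X ≃ₜ X) (he : ∀ x, x ∈ C ↔ e x ∈ C) : C ≃ₜ C where
  toFun x := ⟨e x, (he x).1 x.2⟩
  invFun y := ⟨e.symm y, (he (e.symm y)).2 (by rw [e.apply_symm_apply]; exact y.2)⟩
  left_inv x := Subtype.ext (e.symm_apply_apply x)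
  right_inv y := Subtype.ext (e.apply_symm_apply y)
  continuous_toFun := Continuous.subtype_mk (e.continuous.comp continuous_subtype_val) _
  continuous_invFun := Continuous.subtype_mk (e.symm.continuous.comp continuous_subtype_val) _

theorem restrictHomeo_apply {C : Set X} (e : X ≃ₜ X) (he : ∀ x, x ∈ C ↔ e x ∈ C) (x : C) :
    (restrictHomeo e he x : X) = e x := rfl


section Nhds

variable [LocallyConvexSpace ℝ X]

theorem exists_goodSet {Ω : Set X} (hΩ : Ω ∈ 𝓝 (0:X)) :
    ∃ N : Set X, GoodSet N ∧ N ⊆ Ω := by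
  obtain ⟨M, ⟨hM, hMc⟩, hMΩ⟩ := (LocallyConvexSpace.convex_basis (𝕜 := ℝ) (0:X)).mem_iff.mp hΩ
  refine ⟨interior M ∩ -interior M, ⟨?_, ?_, ?_, ?_⟩, ?_⟩
  · exact (isOpen_interior).inter (isOpen_interior.neg)
  · exact (hMc.interior).inter ((hMc.interior).neg)
  · constructor
    · exact mem_interior_iff_mem_nhds.mpr hM
    · rw [Set.mem_neg, neg_zero]
      exact mem_interior_iff_mem_nhds.mpr hM
  · rintro x ⟨h1, h2⟩
    constructor
    · rwa [Set.mem_neg] at h2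
    · rwa [Set.mem_neg, neg_neg]
  · exact fun x hx => hMΩ (interior_subset hx.1)

theorem exists_goodSet_smul {Ω : Set X} (hΩ : Ω ∈ 𝓝 (0:X)) {r : ℝ} (hr : 0 < r) :
    ∃ N : Set X, GoodSet N ∧ r • N ⊆ Ω := by
  obtain ⟨N₀, hN₀, hN₀Ω⟩ := exists_goodSet hΩ
  refine ⟨r⁻¹ • N₀, ⟨?_, ?_, ?_, ?_⟩, ?_⟩
  · exact hN₀.op.smul₀ (inv_ne_zero hr.ne')
  · exact hN₀.conv.smul _
  · exact ⟨0, hN₀.zero, smul_zero _⟩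
  · intro x hx
    exact neg_mem_smul hN₀.symm hx
  · rw [smul_smul, mul_inv_cancel₀ hr.ne', one_smul]
    exact hN₀Ω

end Nhds

section Rays

variable [T2Space X]

theorem ray_closed {w u : X} (hu : u ≠ 0) :
    IsClosed ((fun y => w + y) '' ((fun s : ℝ => s • u) '' Ici 0)) := by
  have h1 : IsClosed ((fun s : ℝ => s • u) '' Ici 0) :=
    (isClosedEmbedding_smul_left hu).isClosedMap _ isClosed_Ici
  exact (Homeomorph.addLeft w).isClosedMap _ h1

theorem ray_interior_empty (hdim : 2 ≤ Module.rank ℝ X) (w u : X) :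
    interior ((fun y => w + y) '' ((fun s : ℝ => s • u) '' Ici 0)) = ∅ := by
  by_contra h
  obtain ⟨z, hz⟩ := Set.nonempty_iff_ne_empty.mpr h
  set R := (fun y => w + y) '' ((fun s : ℝ => s • u) '' Ici 0) with hR
  -- every element of the ray, shifted by `-z`, lies in the span of `u`
  have hzR : z ∈ R := interior_subset hz
  obtain ⟨y₀, ⟨s₀, _, rfl⟩, rfl⟩ := hzR
  have hdiff : ∀ y ∈ R, y - (w + s₀ • u) ∈ Submodule.span ℝ {u} := by
    rintro y ⟨y', ⟨s, _, rfl⟩, rfl⟩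
    have : w + s • u - (w + s₀ • u) = (s - s₀) • u := by module
    rw [this]
    exact Submodule.smul_mem _ _ (Submodule.mem_span_singleton_self u)
  -- the interior gives a neighborhood of 0 inside the span, hence the span absorbs everything
  have hnhds : (fun y => y + (w + s₀ • u)) ⁻¹' interior R ∈ 𝓝 (0:X) := by
    have hc : Continuous fun y : X => y + (w + s₀ • u) := by fun_prop
    apply (hc.tendsto 0)
    rw [zero_add]
    exact isOpen_interior.mem_nhds hz
  have hspan : ∀ x : X, x ∈ Submodule.span ℝ {u} := by
    intro x
    have h1 : Tendsto (fun r : ℝ => r • x) (𝓝[≠] 0) (𝓝 (0:X)) := by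
      have := (continuous_id.smul (continuous_const (y := x))).tendsto (0:ℝ)
      simp only [Pi.smul_def', id_eq, zero_smul] at this
      exact this.mono_left nhdsWithin_le_nhds
    have h2 : ∀ᶠ r : ℝ in 𝓝[≠] 0, r • x ∈ (fun y => y + (w + s₀ • u)) ⁻¹' interior R :=
      h1.eventually_mem hnhds
    have h3 : ∀ᶠ r : ℝ in 𝓝[≠] 0, r ≠ 0 := eventually_mem_nhdsWithin
    obtain ⟨r, hr1, hr2⟩ := (h2.and h3).exists
    have h4 : r • x + (w + s₀ • u) ∈ R := interior_subset hr1
    have h5 := hdiff _ h4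
    rw [add_sub_cancel_right] at h5
    have h6 : x = r⁻¹ • (r • x) := by rw [smul_smul, inv_mul_cancel₀ hr2, one_smul]
    rw [h6]
    exact Submodule.smul_mem _ _ h5
  have htop : (⊤ : Submodule ℝ X) ≤ Submodule.span ℝ {u} := fun x _ => hspan x
  have h7 : Submodule.span ℝ ({u} : Set X) = ⊤ := top_le_iff.mp htop
  have h8 : Module.rank ℝ X ≤ 1 := by
    have := rank_span_le (R := ℝ) ({u} : Set X)
    rw [h7] at this
    rw [← rank_top ℝ X]
    simpa using this
  have : (2 : Cardinal) ≤ 1 := hdim.trans h8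
  norm_num at this

theorem exists_avoid_rays (hdim : 2 ≤ Module.rank ℝ X) {Ω : Set X} (hΩ : Ω ∈ 𝓝 (0:X))
    {ι : Type*} [Fintype ι] (w u : ι → X) (hu : ∀ i, u i ≠ 0) :
    ∃ c ∈ Ω, ∀ i, ∀ s : ℝ, 0 ≤ s → c ≠ w i + s • u i := by
  set R : ι → Set X := fun i => (fun y => w i + y) '' ((fun s : ℝ => s • u i) '' Ici 0) with hRdef
  classical
  have main : ∀ (F : Finset ι) (O : Set X), IsOpen O → O.Nonempty →
      ∃ c ∈ O, ∀ i ∈ F, c ∉ R i := by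
    intro F
    induction F using Finset.induction_on with
    | empty =>
      intro O _ hO
      obtain ⟨c, hc⟩ := hO
      exact ⟨c, hc, by simp⟩
    | insert i F hnotmem ih =>
      intro O hO hOne
      have hO' : IsOpen (O \ R i) := hO.sdiff (ray_closed (hu i))
      have hne : (O \ R i).Nonempty := by
        rw [Set.diff_nonempty]
        intro hsub
        have h1 : O ⊆ interior (R i) := interior_maximal hsub hO
        rw [ray_interior_empty hdim] at h1
        obtain ⟨c, hc⟩ := hOne
        exact h1 hc
      obtain ⟨c, hc, hcs⟩ := ih _ hO' hne
      refine ⟨c, hc.1, ?_⟩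
      intro j hj
      rcases Finset.mem_insert.mp hj with rfl | hj'
      · exact hc.2
      · exact hcs j hj'
  obtain ⟨c, hc, hcs⟩ := main Finset.univ (interior Ω) isOpen_interior
    ⟨0, mem_interior_iff_mem_nhds.mpr hΩ⟩
  refine ⟨c, interior_subset hc, ?_⟩
  intro i s hs hceq
  apply hcs i (Finset.mem_univ i)
  exact ⟨s • u i, ⟨s, hs, rfl⟩, hceq.symm⟩

end Rays


end PropP

/-- A uniform space `Z` has property (P): for each entourage `V` there exists an entourage `U`
such that for any `k ≥ 1`, any pairwise distinct points `a₁, …, a_k` and any pairwise distinct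
points `b₁, …, b_k` with `(a_j, b_j) ∈ U` for all `j`, there is a homeomorphism `h : Z → Z`
with `h (a_j) = b_j` for all `j` and `(x, h x) ∈ V` for all `x`. -/
def PropertyP (Z : Type*) [UniformSpace Z] [TopologicalSpace Z] : Prop :=
  ∀ V ∈ uniformity Z, ∃ U ∈ uniformity Z,
    ∀ (k : ℕ), 1 ≤ k → ∀ a b : Fin k → Z, Function.Injective a → Function.Injective b →
      (∀ j : Fin k, (a j, b j) ∈ U) →
      ∃ h : Z ≃ₜ Z, (∀ j : Fin k, h (a j) = b j) ∧ ∀ x : Z, (x, h x) ∈ V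

open PropP

/-- Every open convex set in a locally convex space of real dimension at least two, equipped
with the uniformity induced from the space, has property (P). -/
theorem isOpen_convex_propertyP
    {𝕂 : Type*} [RCLike 𝕂] {X : Type*} [AddCommGroup X] [Module 𝕂 X]
    [Module ℝ X] [IsScalarTower ℝ 𝕂 X]
    [UniformSpace X] [IsUniformAddGroup X] [ContinuousSMul 𝕂 X] [ContinuousSMul ℝ X]
    [LocallyConvexSpace ℝ X] [T2Space X]
    (hdim : 2 ≤ Module.rank ℝ X)
    (C : Set X) (hC : IsOpen C) (hconv : Convex ℝ C) :
    PropertyP C := by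
  intro V hV
  rw [uniformity_setCoe, Filter.mem_comap] at hV
  obtain ⟨t, htX, htV⟩ := hV
  rw [uniformity_eq_comap_nhds_zero, Filter.mem_comap] at htX
  obtain ⟨Ω, hΩ, hΩt⟩ := htX
  obtain ⟨W, hW, hW2⟩ := exists_goodSet_smul (X := X) hΩ (r := 2) two_pos
  obtain ⟨W₁, hW₁, hW₁2⟩ := exists_goodSet_smul (X := X) hW.nhds (r := 2) two_pos
  refine ⟨(Prod.map ((↑) : C → X) ((↑) : C → X)) ⁻¹' {p : X × X | p.2 - p.1 ∈ W₁}, ?_, ?_⟩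
  · rw [uniformity_setCoe]
    apply Filter.preimage_mem_comap
    rw [uniformity_eq_comap_nhds_zero]
    exact Filter.preimage_mem_comap hW₁.nhds
  intro k hk a b ha hb hab
  haveI : Nonempty (Fin k) := ⟨⟨0, hk⟩⟩
  set ax : Fin k → X := fun j => (a j : X) with hax
  set bx : Fin k → X := fun j => (b j : X) with hbx
  have habX : ∀ j, bx j - ax j ∈ W₁ := fun j => hab j
  have haxInj : Function.Injective ax := fun i j h => ha (Subtype.coe_injective h)
  have hbxInj : Function.Injective bx := fun i j h => hb (Subtype.coe_injective h)
  -- Step 1 : the neighborhood M adapted to the target points b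
  have hbC : Set.range bx ⊆ C := by rintro z ⟨j, rfl⟩; exact (b j).2
  obtain ⟨Ob, hOb, hObC⟩ :=
    compact_open_separated_add_right (Set.finite_range bx).isCompact hC hbC
  have hD0 : (0:X) ∉ (fun p : Fin k × Fin k => bx p.1 - bx p.2) '' {p | p.1 ≠ p.2} := by
    rintro ⟨⟨i,j⟩, hij, h0⟩
    exact hij (hbxInj (sub_eq_zero.mp h0))
  have hDopen : ((fun p : Fin k × Fin k => bx p.1 - bx p.2) '' {p | p.1 ≠ p.2})ᶜ ∈ 𝓝 (0:X) :=
    (((Set.toFinite _).image _).isClosed.isOpen_compl).mem_nhds hD0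
  obtain ⟨M, hM, hM6⟩ := exists_goodSet_smul (X := X)
    (Filter.inter_mem (Filter.inter_mem hDopen hOb) hW₁.nhds) (r := 6) (by norm_num)
  have hMsub6 : M ⊆ (6:ℝ) • M := fun x hx =>
    smul_mono_set hM.conv hM.zero zero_le_one (by norm_num) (mem_one_smul hx)
  have hMW₁ : M ⊆ W₁ := fun x hx => (hM6 (hMsub6 hx)).2
  have hMOb : (3:ℝ) • M ⊆ Ob := fun x hx =>
    (hM6 (smul_mono_set hM.conv hM.zero (by norm_num) (by norm_num) hx)).1.2
  have hMD : ∀ i j, i ≠ j → bx i - bx j ∉ (6:ℝ) • M := fun i j hij hmem =>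
    (hM6 hmem).1.1 ⟨(i,j), hij, rfl⟩
  have hMC : ∀ (j) (z : X), z - bx j ∈ (3:ℝ) • M → z ∈ C := by
    intro j z hz
    have h1 : bx j + (z - bx j) ∈ Set.range bx + Ob :=
      Set.add_mem_add (Set.mem_range_self j) (hMOb hz)
    have h2 : bx j + (z - bx j) = z := by abel
    rw [h2] at h1
    exact hObC h1
  -- Step 2 : perturbations c making the straight-line motions pairwise collision-free
  have hΩc0 : (0:X) ∈ (2⁻¹ : ℝ) • M := ⟨0, hM.zero, smul_zero _⟩
  have hΩcn : (2⁻¹ : ℝ) • M ∈ 𝓝 (0:X) :=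
    (set_smul_mem_nhds_zero_iff (by norm_num)).mpr hM.nhds
  obtain ⟨c, hcΩ, hcond⟩ : ∃ c : Fin k → X, (∀ j, c j ∈ (2⁻¹ : ℝ) • M) ∧
      ∀ i j : Fin k, i ≠ j → ∀ t ∈ Icc (0:ℝ) 1,
        (1 - t) • (ax i - ax j) + t • ((bx i + c i) - (bx j + c j)) ≠ 0 := by
    suffices H : ∀ n : ℕ, ∃ c : Fin k → X, (∀ j, c j ∈ (2⁻¹ : ℝ) • M) ∧
        ∀ i j : Fin k, i ≠ j → (i:ℕ) < n → (j:ℕ) < n → ∀ t ∈ Icc (0:ℝ) 1,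
          (1 - t) • (ax i - ax j) + t • ((bx i + c i) - (bx j + c j)) ≠ 0 by
      obtain ⟨c, h1, h2⟩ := H k
      exact ⟨c, h1, fun i j hij => h2 i j hij i.2 j.2⟩
    intro n
    induction n with
    | zero => exact ⟨fun _ => 0, fun _ => hΩc0, fun i j _ hi => absurd hi (Nat.not_lt_zero _)⟩
    | succ n ih =>
      obtain ⟨c, hc1, hc2⟩ := ih
      by_cases hn : n < k
      · set j₀ : Fin k := ⟨n, hn⟩ with hj₀
        have hune : ∀ i : {i : Fin k // (i:ℕ) < n}, ax (i : Fin k) - ax j₀ ≠ 0 := by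
          intro i
          rw [sub_ne_zero]
          intro h
          have h2 : (i : Fin k) = j₀ := haxInj h
          have h3 := i.2
          rw [h2] at h3
          simp [hj₀] at h3
        obtain ⟨cnew, hcnewΩ, hcnew⟩ := exists_avoid_rays hdim hΩcn
          (fun i : {i : Fin k // (i:ℕ) < n} => (bx (i : Fin k) + c (i : Fin k)) - bx j₀)
          (fun i => ax (i : Fin k) - ax j₀) hune
        refine ⟨Function.update c j₀ cnew, ?_, ?_⟩
        · intro j
          by_cases h : j = j₀
          · rw [h, Function.update_self]; exact hcnewΩ
          · rw [Function.update_of_ne h]; exact hc1 j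
        · have key : ∀ i : Fin k, (i:ℕ) < n → ∀ t ∈ Icc (0:ℝ) 1,
              (1 - t) • (ax i - ax j₀) + t • ((bx i + Function.update c j₀ cnew i) -
                (bx j₀ + Function.update c j₀ cnew j₀)) ≠ 0 := by
            intro i hi t ht heq
            have hij₀ : i ≠ j₀ := by
              intro h
              rw [h] at hi
              simp [hj₀] at hi
            rw [Function.update_self, Function.update_of_ne hij₀] at heq
            rcases eq_or_lt_of_le ht.1 with h0 | h0
            · rw [← h0] at heq
              simp only [sub_zero, one_smul, zero_smul, add_zero] at heq
              exact hune ⟨i, hi⟩ heq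
            · have h1 : t • cnew - (t • ((bx i + c i) - bx j₀) + (1 - t) • (ax i - ax j₀)) =
                  -((1 - t) • (ax i - ax j₀) + t • ((bx i + c i) - (bx j₀ + cnew))) := by
                module
              rw [heq, neg_zero] at h1
              have h1' := sub_eq_zero.mp h1
              have h2 : cnew = ((bx i + c i) - bx j₀) + ((1-t)/t) • (ax i - ax j₀) := by
                have h3 : cnew = t⁻¹ • (t • cnew) := by
                  rw [smul_smul, inv_mul_cancel₀ h0.ne', one_smul]
                rw [h3, h1', smul_add, smul_smul, smul_smul, inv_mul_cancel₀ h0.ne',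
                  one_smul, div_eq_inv_mul, mul_comm]
              exact hcnew ⟨i, hi⟩ ((1-t)/t) (div_nonneg (by linarith [ht.2]) h0.le) h2
          intro i j hij hi hj t ht
          by_cases hin : (i:ℕ) < n
          · by_cases hjn : (j:ℕ) < n
            · have hi' : i ≠ j₀ := by intro h; rw [h] at hin; simp [hj₀] at hin
              have hj' : j ≠ j₀ := by intro h; rw [h] at hjn; simp [hj₀] at hjn
              rw [Function.update_of_ne hi', Function.update_of_ne hj']
              exact hc2 i j hij hin hjn t ht
            · have hjj : j = j₀ := by
                apply Fin.ext
                simp only [hj₀]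
                omega
              rw [hjj]
              exact key i hin t ht
          · have hii : i = j₀ := by
              apply Fin.ext
              simp only [hj₀]
              omega
            have hjn : (j:ℕ) < n := by
              have h4 : (j:ℕ) ≠ n := by
                intro h
                apply hij
                rw [hii]
                apply Fin.ext
                simp only [hj₀]
                omega
              omega
            intro heq
            rw [hii] at heq
            apply key j hjn t ht
            have hs : (1 - t) • (ax j - ax j₀) + t • ((bx j + Function.update c j₀ cnew j) -
                (bx j₀ + Function.update c j₀ cnew j₀)) =
                -((1 - t) • (ax j₀ - ax j) + t • ((bx j₀ + Function.update c j₀ cnew j₀) -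
                  (bx j + Function.update c j₀ cnew j))) := by module
            rw [heq, neg_zero] at hs
            exact hs
      · exact ⟨c, hc1, fun i j hij hi hj => hc2 i j hij (by omega) (by omega)⟩
  -- Step 3 : the perturbed endpoints and straight-line paths
  have hhalfM : (2⁻¹ : ℝ) • M ⊆ M := by
    intro x hx
    have := smul_mono_set hM.conv hM.zero (by norm_num : (0:ℝ) ≤ 2⁻¹)
      (by norm_num : (2⁻¹:ℝ) ≤ 1) hx
    rwa [one_smul] at this
  have hcM : ∀ j, c j ∈ M := fun j => hhalfM (hcΩ j)
  have hgaugec : ∀ j, gauge M (c j) ≤ 1/2 := by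
    intro j
    have := gauge_le_of_mem (by norm_num : (0:ℝ) ≤ 2⁻¹) (hcΩ j)
    norm_num at this
    linarith
  set b' : Fin k → X := fun j => bx j + c j with hb'
  set v : Fin k → X := fun j => b' j - ax j with hv
  have hb'C : ∀ j, b' j ∈ C := by
    intro j
    apply hMC j
    have h1 : b' j - bx j = c j := by simp only [hb']; abel
    rw [h1]
    exact smul_mono_set hM.conv hM.zero zero_le_one (by norm_num) (mem_one_smul (hcM j))
  have hvW : ∀ j, v j ∈ W := by
    intro j
    have h3 := add_mem_smul hW₁.conv zero_le_one zero_le_one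
      (mem_one_smul (habX j)) (mem_one_smul (hMW₁ (hcM j)))
    norm_num at h3
    have h4 : v j = (bx j - ax j) + c j := by simp only [hv, hb']; abel
    rw [h4]
    exact hW₁2 h3
  set γ : Fin k → ℝ → X := fun j t => ax j + t • v j with hγ
  have hγ0 : ∀ j, γ j 0 = ax j := by intro j; rw [hγ]; simp
  have hγ1 : ∀ j, γ j 1 = b' j := by intro j; rw [hγ]; simp [hv]
  have hsame : ∀ i j, i ≠ j → ∀ t ∈ Icc (0:ℝ) 1, γ i t - γ j t ≠ 0 := by
    intro i j hij t ht h0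
    apply hcond i j hij t ht
    have h1 : (1 - t) • (ax i - ax j) + t • (b' i - b' j) = γ i t - γ j t := by
      simp only [hγ, hv]
      module
    simp only [hb'] at h1
    rw [h1, h0]
  have hγcont : ∀ j, Continuous (γ j) := by
    intro j
    simp only [hγ]
    exact continuous_const.add (continuous_id.smul continuous_const)
  -- Step 4 : compact path set and separation neighborhood N
  set Γ : Set X := ⋃ j, γ j '' Icc 0 1 with hΓ
  have hΓcpt : IsCompact Γ := isCompact_iUnion (fun j => isCompact_Icc.image (hγcont j))
  have hΓC : Γ ⊆ C := by
    intro z hz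
    rw [hΓ, Set.mem_iUnion] at hz
    obtain ⟨j, t, ht, rfl⟩ := hz
    have h1 : γ j t = (1 - t) • ax j + t • b' j := by
      simp only [hγ, hv]
      module
    rw [h1]
    exact hconv (a j).2 (hb'C j) (by linarith [ht.2]) ht.1 (by ring)
  set K : Set X := ⋃ p : {p : Fin k × Fin k // p.1 ≠ p.2},
      (fun t => γ p.1.1 t - γ p.1.2 t) '' Icc 0 1 with hK
  have hKcpt : IsCompact K :=
    isCompact_iUnion (fun p => isCompact_Icc.image ((hγcont _).sub (hγcont _)))
  have hK0 : (0:X) ∉ K := by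
    rw [hK, Set.mem_iUnion]
    rintro ⟨⟨⟨i,j⟩, hij⟩, t, ht, h0⟩
    exact hsame i j hij t ht h0
  obtain ⟨OΓ, hOΓ, hOΓC⟩ := compact_open_separated_add_right hΓcpt hC hΓC
  have hKc : Kᶜ ∈ 𝓝 (0:X) := (hKcpt.isClosed.isOpen_compl).mem_nhds hK0
  obtain ⟨N, hN, hN4⟩ := exists_goodSet_smul (X := X)
    (Filter.inter_mem hKc hOΓ) (r := 4) (by norm_num)
  have hN2O : (2:ℝ) • N ⊆ OΓ := fun x hx =>
    (hN4 (smul_mono_set hN.conv hN.zero (by norm_num) (by norm_num) hx)).2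
  have hNK : ∀ z ∈ (4:ℝ) • N, z ∉ K := fun z hz => (hN4 hz).1
  have hNC : ∀ j, ∀ t ∈ Icc (0:ℝ) 1, ∀ z : X, z - γ j t ∈ (2:ℝ) • N → z ∈ C := by
    intro j t ht z hz
    have h1 : γ j t + (z - γ j t) ∈ Γ + OΓ :=
      Set.add_mem_add (Set.mem_iUnion.mpr ⟨j, t, ht, rfl⟩) (hN2O hz)
    have h2 : γ j t + (z - γ j t) = z := by abel
    rw [h2] at h1
    exact hOΓC h1
  -- Step 5 : number of time steps
  set gmax : ℝ := Finset.univ.sup' Finset.univ_nonempty (fun j => gauge N (v j)) with hgmax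
  set T : ℕ := ⌈2 * gmax⌉₊ + 1 with hT
  have hTpos : (0:ℝ) < (T:ℝ) := by
    rw [hT]; push_cast; positivity
  have hTne : (T:ℝ) ≠ 0 := hTpos.ne'
  have hTg : ∀ j, gauge N ((T:ℝ)⁻¹ • v j) ≤ 1/2 := by
    intro j
    rw [gauge_smul_of_nonneg (by positivity), smul_eq_mul]
    have h1 : gauge N (v j) ≤ gmax := by
      rw [hgmax]
      exact Finset.le_sup' (fun j => gauge N (v j)) (Finset.mem_univ j)
    have h2 : 2 * gmax ≤ (T:ℝ) := by
      rw [hT]; push_cast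
      linarith [Nat.le_ceil (2*gmax)]
    have h4 : gauge N (v j) ≤ (T:ℝ)/2 := by linarith
    calc (T:ℝ)⁻¹ * gauge N (v j) ≤ (T:ℝ)⁻¹ * ((T:ℝ)/2) :=
          mul_le_mul_of_nonneg_left h4 (by positivity)
      _ = 1/2 := by field_simp
  -- Step 6 : the time-step homeomorphisms
  set St : ℕ → (X ≃ₜ X) := fun m => PropP.iterComp (fun jn => if h : jn < k then
      bumpHomeo hN (γ ⟨jn, h⟩ ((m:ℝ)/T)) ((T:ℝ)⁻¹ • v ⟨jn, h⟩) (hTg ⟨jn, h⟩)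
      else Homeomorph.refl X) k with hStdef
  have hstep : ∀ m, m < T →
      (∀ j : Fin k, St m (γ j ((m:ℝ)/T)) = γ j (((m:ℝ)+1)/T)) ∧
      (∀ x : X, St m x - x ∈ (T:ℝ)⁻¹ • W) ∧
      (∀ x : X, x ∈ C ↔ St m x ∈ C) := by
    intro m hm
    have hm1 : (m:ℝ)/T ∈ Icc (0:ℝ) 1 := ⟨by positivity, by
      rw [div_le_one hTpos]; exact_mod_cast hm.le⟩
    set f : ℕ → X ≃ₜ X := fun jn => if h : jn < k then
        bumpHomeo hN (γ ⟨jn, h⟩ ((m:ℝ)/T)) ((T:ℝ)⁻¹ • v ⟨jn, h⟩) (hTg ⟨jn, h⟩)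
        else Homeomorph.refl X with hf
    have hStf : St m = PropP.iterComp f k := rfl
    set A : ℕ → Set X := fun jn => if h : jn < k then
        {x : X | x - γ ⟨jn, h⟩ ((m:ℝ)/T) ∈ N} else ∅ with hA
    set S : ℕ → Set X := fun jn => if h : jn < k then
        {x : X | x - γ ⟨jn, h⟩ ((m:ℝ)/T) ∈ (2:ℝ) • N} else ∅ with hS
    have hIC := PropP.iterComp_fix f A S k
      (by
        intro jn hjn x hx
        simp only [hA, dif_pos hjn] at hx
        simp only [hf, dif_pos hjn]
        exact bumpHomeo_fix hN _ _ (hTg _) hx)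
      (by
        intro jn hjn x hx
        simp only [hA, dif_pos hjn] at hx
        simp only [hf, hS, dif_pos hjn]
        exact bumpHomeo_moved hN _ _ (hTg _) hx)
      (by
        intro jn hjn x hx
        simp only [hA, dif_pos hjn] at hx
        simp only [hS, dif_pos hjn]
        exact smul_mono_set hN.conv hN.zero zero_le_one one_le_two (mem_one_smul hx))
      (by
        intro i hi j hj hij
        simp only [hS, dif_pos hi, dif_pos hj]
        rw [Set.disjoint_left]
        intro z hz1 hz2
        simp only [Set.mem_setOf_eq] at hz1 hz2
        have hij' : (⟨i, hi⟩ : Fin k) ≠ ⟨j, hj⟩ := by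
          intro h
          exact hij (congrArg Fin.val h)
        have h1 : γ (⟨i, hi⟩ : Fin k) ((m:ℝ)/T) - γ (⟨j, hj⟩ : Fin k) ((m:ℝ)/T) =
            (z - γ (⟨j, hj⟩ : Fin k) ((m:ℝ)/T)) + -(z - γ (⟨i, hi⟩ : Fin k) ((m:ℝ)/T)) := by
          abel
        have h2 := add_mem_smul hN.conv (by norm_num : (0:ℝ) ≤ 2) (by norm_num : (0:ℝ) ≤ 2)
          hz2 (neg_mem_smul hN.symm hz1)
        rw [← h1] at h2
        norm_num at h2
        apply hNK _ h2
        exact Set.mem_iUnion.mpr ⟨⟨(⟨i, hi⟩, ⟨j, hj⟩), hij'⟩, (m:ℝ)/T, hm1, rfl⟩)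
    refine ⟨?_, ?_, ?_⟩
    · intro j
      have hmem : γ j ((m:ℝ)/T) ∈ A j.val := by
        simp only [hA, dif_pos j.2, Set.mem_setOf_eq, Fin.eta, sub_self]
        exact hN.zero
      rw [hStf, hIC.2 j.val j.2 _ hmem]
      simp only [hf, dif_pos j.2, Fin.eta]
      rw [bumpHomeo_center]
      simp only [hγ]
      rw [add_assoc, ← add_smul]
      congr 2
      field_simp
    · intro x
      by_cases hx : ∀ jn, jn < k → x ∉ A jn
      · rw [hStf, hIC.1 x hx, sub_self]
        exact ⟨0, hW.zero, smul_zero _⟩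
      · push_neg at hx
        obtain ⟨jn, hjn, hmem⟩ := hx
        rw [hStf, hIC.2 jn hjn x hmem]
        simp only [hf, dif_pos hjn]
        obtain ⟨tt, htt, hdisp⟩ := bumpHomeo_disp hN _ _ (hTg (⟨jn, hjn⟩ : Fin k)) x
        rw [hdisp, smul_comm]
        exact smul_mem_smul_set (smul_unit_mem hW.conv hW.zero (hvW _) htt)
    · intro x
      rw [hStf]
      apply PropP.iterComp_invC f k C
      intro jn hjn y
      simp only [hf, dif_pos hjn]
      exact bumpHomeo_C hN _ _ (hTg _) (fun z hz => hNC _ _ hm1 z hz) y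
  -- the full straight-line flow
  have hSFtrack : ∀ j, PropP.iterComp St T (ax j) = b' j := by
    intro j
    have h1 := PropP.iterComp_track St T (fun m => γ j ((m:ℝ)/T)) (by
      intro m hm
      have := (hstep m hm).1 j
      rw [this]
      congr 1
      push_cast
      ring)
    simp only [Nat.cast_zero, zero_div] at h1
    rw [hγ0, div_self hTne, hγ1] at h1
    exact h1
  have hSFdisp : ∀ x, PropP.iterComp St T x - x ∈ W := by
    intro x
    have h1 := PropP.iterComp_disp St W hW.conv hW.zero T (T:ℝ)⁻¹ (by positivity)
      (fun m hm => (hstep m hm).2.1) x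
    rw [mul_inv_cancel₀ hTne, one_smul] at h1
    exact h1
  have hSFC : ∀ x, x ∈ C ↔ PropP.iterComp St T x ∈ C :=
    PropP.iterComp_invC St T C (fun m hm => (hstep m hm).2.2)
  -- Step 7 : the final correction map P2 moving b' j back to b j
  have hgc' : ∀ j : Fin k, gauge M (-(c j)) ≤ 1/2 := by
    intro j
    rw [gauge_neg hM.symm]
    exact hgaugec j
  set f2 : ℕ → X ≃ₜ X := fun jn => if h : jn < k then
      bumpHomeo hM (b' ⟨jn, h⟩) (-(c ⟨jn, h⟩)) (hgc' ⟨jn, h⟩)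
      else Homeomorph.refl X with hf2
  set A2 : ℕ → Set X := fun jn => if h : jn < k then
      {x : X | x - b' ⟨jn, h⟩ ∈ M} else ∅ with hA2
  set S2 : ℕ → Set X := fun jn => if h : jn < k then
      {x : X | x - b' ⟨jn, h⟩ ∈ (2:ℝ) • M} else ∅ with hS2
  have hsubC2 : ∀ j : Fin k, ∀ z : X, z - b' j ∈ (2:ℝ) • M → z ∈ C := by
    intro j z hz
    apply hMC j
    have h1 : z - bx j = (z - b' j) + c j := by simp only [hb']; abel
    rw [h1]
    have h2 := add_mem_smul hM.conv (by norm_num : (0:ℝ) ≤ 2) zero_le_one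
      hz (mem_one_smul (hcM j))
    norm_num at h2
    exact h2
  have hIC2 := PropP.iterComp_fix f2 A2 S2 k
    (by
      intro jn hjn x hx
      simp only [hA2, dif_pos hjn] at hx
      simp only [hf2, dif_pos hjn]
      exact bumpHomeo_fix hM _ _ (hgc' _) hx)
    (by
      intro jn hjn x hx
      simp only [hA2, dif_pos hjn] at hx
      simp only [hf2, hS2, dif_pos hjn]
      exact bumpHomeo_moved hM _ _ (hgc' _) hx)
    (by
      intro jn hjn x hx
      simp only [hA2, dif_pos hjn] at hx
      simp only [hS2, dif_pos hjn]
      exact smul_mono_set hM.conv hM.zero zero_le_one one_le_two (mem_one_smul hx))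
    (by
      intro i hi j hj hij
      simp only [hS2, dif_pos hi, dif_pos hj]
      rw [Set.disjoint_left]
      intro z hz1 hz2
      simp only [Set.mem_setOf_eq] at hz1 hz2
      have hij' : (⟨i, hi⟩ : Fin k) ≠ ⟨j, hj⟩ := by
        intro h
        exact hij (congrArg Fin.val h)
      apply hMD ⟨i, hi⟩ ⟨j, hj⟩ hij'
      have h1 : bx (⟨i, hi⟩ : Fin k) - bx ⟨j, hj⟩ =
          (b' ⟨i, hi⟩ - b' ⟨j, hj⟩) + (-(c ⟨i, hi⟩)) + (c ⟨j, hj⟩) := by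
        simp only [hb']
        abel
      rw [h1]
      have h2 := add_mem_smul hM.conv (by norm_num : (0:ℝ) ≤ 2) (by norm_num : (0:ℝ) ≤ 2)
        hz2 (neg_mem_smul hM.symm hz1)
      have he : (z - b' ⟨j, hj⟩) + -(z - b' ⟨i, hi⟩) = b' ⟨i, hi⟩ - b' ⟨j, hj⟩ := by abel
      rw [he] at h2
      have h3 := add_mem_smul hM.conv (by norm_num : (0:ℝ) ≤ 4) zero_le_one
        (by norm_num at h2 ⊢; exact h2) (mem_one_smul (hM.symm _ (hcM ⟨i, hi⟩)))
      have h4 := add_mem_smul hM.conv (by norm_num : (0:ℝ) ≤ 5) zero_le_one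
        (by norm_num at h3 ⊢; exact h3) (mem_one_smul (hcM ⟨j, hj⟩))
      norm_num at h4
      exact h4)
  have hP2track : ∀ j : Fin k, PropP.iterComp f2 k (b' j) = bx j := by
    intro j
    have hmem : b' j ∈ A2 j.val := by
      simp only [hA2, dif_pos j.2, Set.mem_setOf_eq, Fin.eta, sub_self]
      exact hM.zero
    rw [hIC2.2 j.val j.2 _ hmem]
    simp only [hf2, dif_pos j.2, Fin.eta]
    rw [bumpHomeo_center]
    simp only [hb']
    abel
  have hP2disp : ∀ x : X, PropP.iterComp f2 k x - x ∈ W := by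
    intro x
    by_cases hx : ∀ jn, jn < k → x ∉ A2 jn
    · rw [hIC2.1 x hx, sub_self]
      exact hW.zero
    · push_neg at hx
      obtain ⟨jn, hjn, hmem⟩ := hx
      rw [hIC2.2 jn hjn x hmem]
      simp only [hf2, dif_pos hjn]
      obtain ⟨tt, htt, hdisp⟩ := bumpHomeo_disp hM _ _ (hgc' (⟨jn, hjn⟩ : Fin k)) x
      rw [hdisp]
      have hcW : -(c (⟨jn, hjn⟩ : Fin k)) ∈ W := by
        apply hW₁2
        have := mem_one_smul (hMW₁ (hM.symm _ (hcM (⟨jn, hjn⟩ : Fin k))))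
        exact smul_mono_set hW₁.conv hW₁.zero zero_le_one one_le_two this
      exact smul_unit_mem hW.conv hW.zero hcW htt
  have hP2C : ∀ x : X, x ∈ C ↔ PropP.iterComp f2 k x ∈ C := by
    apply PropP.iterComp_invC f2 k C
    intro jn hjn y
    simp only [hf2, dif_pos hjn]
    exact bumpHomeo_C hM _ _ (hgc' _) (hsubC2 _) y
  -- Step 8 : assemble the homeomorphism
  set H : X ≃ₜ X := (PropP.iterComp St T).trans (PropP.iterComp f2 k) with hH
  have hHC : ∀ x : X, x ∈ C ↔ H x ∈ C := by
    intro x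
    rw [hH]
    exact (hSFC x).trans (hP2C _)
  refine ⟨PropP.restrictHomeo H hHC, ?_, ?_⟩
  · intro j
    apply Subtype.ext
    rw [PropP.restrictHomeo_apply]
    show H (ax j) = bx j
    rw [hH, Homeomorph.trans_apply, hSFtrack j, hP2track j]
  · intro x
    apply htV
    show ((x : X), (PropP.restrictHomeo H hHC x : X)) ∈ t
    apply hΩt
    show (PropP.restrictHomeo H hHC x : X) - (x : X) ∈ Ω
    rw [PropP.restrictHomeo_apply]
    apply hW2
    have h1 : H (x:X) - (x:X) =
        (PropP.iterComp f2 k (PropP.iterComp St T (x:X)) - PropP.iterComp St T (x:X)) +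
        (PropP.iterComp St T (x:X) - (x:X)) := by
      rw [hH, Homeomorph.trans_apply]
      abel
    rw [h1]
    have h2 := add_mem_smul hW.conv zero_le_one zero_le_one
      (mem_one_smul (hP2disp (PropP.iterComp St T (x:X)))) (mem_one_smul (hSFdisp (x:X)))
    have h3 : ((1:ℝ)+1) • W = (2:ℝ) • W := by norm_num
    rw [h3] at h2
    exact h2
end

section
/- Every invertible generalized hyperbolic operator on a Banach space is topologically stable. -/
open Filter Topology Set

/-- An invertible operator `T` on a Banach space is generalized hyperbolic: `X = M ⊕ N` with
`M`, `N` closed subspaces, `T(M) ⊆ M`, `T⁻¹(N) ⊆ N`, and there are `c > 0`, `t ∈ (0,1)` with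
`‖Tⁿ y‖ ≤ c tⁿ ‖y‖` and `‖T⁻ⁿ z‖ ≤ c tⁿ ‖z‖` for all `y ∈ M`, `z ∈ N`, `n ∈ ℕ`. -/
def IsGeneralizedHyperbolicBanach {𝕂 : Type*} [RCLike 𝕂] {X : Type*} [NormedAddCommGroup X]
    [NormedSpace 𝕂 X] (T : X ≃L[𝕂] X) : Prop :=
  ∃ M N : Submodule 𝕂 X, IsClosed (M : Set X) ∧ IsClosed (N : Set X) ∧ IsCompl M N ∧
    (∀ y ∈ M, T y ∈ M) ∧ (∀ z ∈ N, T.symm z ∈ N) ∧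
    ∃ c > (0 : ℝ), ∃ t ∈ Set.Ioo (0 : ℝ) 1,
      (∀ y ∈ M, ∀ n : ℕ, ‖(⇑T)^[n] y‖ ≤ c * t ^ n * ‖y‖) ∧
      (∀ z ∈ N, ∀ n : ℕ, ‖(⇑T.symm)^[n] z‖ ≤ c * t ^ n * ‖z‖)

/-- `T` is topologically stable. -/
def TopologicallyStableBanach {X : Type*} [NormedAddCommGroup X] (T : X → X) : Prop :=
  ∀ ε > (0 : ℝ), ∃ δ > (0 : ℝ), ∀ S : X ≃ₜ X,
    (∀ x : X, ‖T x - S x‖ < δ) →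
    ∃ φ : X → X, Continuous φ ∧ (∀ x : X, T (φ x) = φ (S x)) ∧ ∀ x : X, ‖φ x - x‖ < ε

/-- Every invertible generalized hyperbolic operator on a Banach space is topologically
stable. -/
theorem generalizedHyperbolic_topologicallyStable_banach
    {𝕂 : Type*} [RCLike 𝕂] {X : Type*} [NormedAddCommGroup X] [NormedSpace 𝕂 X]
    [CompleteSpace X] (T : X ≃L[𝕂] X) (hT : IsGeneralizedHyperbolicBanach T) :
    TopologicallyStableBanach (⇑T) := by
  obtain ⟨M, N, hM, hN, hcompl, hTM, hTN, c, hc, t, ht, hbM, hbN⟩ := hT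
  intro ε hε
  set P : X →L[𝕂] X := M.subtypeL.comp (M.linearProjOfClosedCompl N hcompl hM hN) with hPdef
  set Q : X →L[𝕂] X := N.subtypeL.comp (N.linearProjOfClosedCompl M hcompl.symm hN hM) with hQdef
  have hPmem : ∀ x, P x ∈ M := fun x => (M.linearProjOfClosedCompl N hcompl hM hN x).2
  have hQmem : ∀ x, Q x ∈ N := fun x => (N.linearProjOfClosedCompl M hcompl.symm hN hM x).2
  have hPQ : ∀ x, P x + Q x = x := by
    intro x
    simpa [hPdef, hQdef, Submodule.coe_continuous_linearProjOfClosedCompl'] using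
      Submodule.projection_add_projection_eq_self hcompl x
  set A : ℝ := ‖P‖ + ‖Q‖ + 1 with hAdef
  have hA : 0 < A := by positivity
  have ht1 : (0:ℝ) < 1 - t := by linarith [ht.2]
  set δ : ℝ := ε * (1 - t) / (2 * c * A) with hδdef
  have hδ : 0 < δ := by positivity
  refine ⟨δ, hδ, ?_⟩
  intro S hS
  set g : X → X := fun x => S x - T x with hgdef
  have hgc : Continuous g := S.continuous.sub T.continuous
  have hg : ∀ x, ‖g x‖ ≤ δ := by
    intro x
    rw [hgdef]
    simpa [norm_sub_rev] using (hS x).le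
  -- the two series
  set fM : ℕ → X → X := fun n x => (⇑T)^[n] (P (g ((⇑S.symm)^[n+1] x))) with hfM
  set fN : ℕ → X → X := fun n x => (⇑T.symm)^[n+1] (Q (g ((⇑S)^[n] x))) with hfN
  have hbfM : ∀ n x, ‖fM n x‖ ≤ (c * (‖P‖ * δ)) * t ^ n := by
    intro n x
    have h1 := hbM (P (g ((⇑S.symm)^[n+1] x))) (hPmem _) n
    have h2 : ‖P (g ((⇑S.symm)^[n+1] x))‖ ≤ ‖P‖ * δ :=
      (P.le_opNorm _).trans (mul_le_mul_of_nonneg_left (hg _) (norm_nonneg _))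
    have h3 : (0:ℝ) ≤ c * t ^ n := le_of_lt (mul_pos hc (pow_pos ht.1 n))
    calc ‖fM n x‖ ≤ c * t ^ n * ‖P (g ((⇑S.symm)^[n+1] x))‖ := h1
      _ ≤ c * t ^ n * (‖P‖ * δ) := mul_le_mul_of_nonneg_left h2 h3
      _ = (c * (‖P‖ * δ)) * t ^ n := by ring
  have hbfN : ∀ n x, ‖fN n x‖ ≤ (c * (‖Q‖ * δ)) * t ^ n := by
    intro n x
    have h1 := hbN (Q (g ((⇑S)^[n] x))) (hQmem _) (n+1)
    have h2 : ‖Q (g ((⇑S)^[n] x))‖ ≤ ‖Q‖ * δ :=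
      (Q.le_opNorm _).trans (mul_le_mul_of_nonneg_left (hg _) (norm_nonneg _))
    have htn : t ^ (n+1) ≤ t ^ n := pow_le_pow_of_le_one ht.1.le ht.2.le (Nat.le_succ n)
    have h3 : (0:ℝ) ≤ c * t ^ (n+1) := le_of_lt (mul_pos hc (pow_pos ht.1 (n+1)))
    calc ‖fN n x‖ ≤ c * t ^ (n+1) * ‖Q (g ((⇑S)^[n] x))‖ := h1
      _ ≤ c * t ^ (n+1) * (‖Q‖ * δ) := mul_le_mul_of_nonneg_left h2 h3
      _ ≤ c * t ^ n * (‖Q‖ * δ) :=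
          mul_le_mul_of_nonneg_right (mul_le_mul_of_nonneg_left htn hc.le)
            (mul_nonneg (norm_nonneg _) hδ.le)
      _ = (c * (‖Q‖ * δ)) * t ^ n := by ring
  have hgeo : Summable fun n : ℕ => t ^ n := summable_geometric_of_lt_one ht.1.le ht.2
  have hsumM : ∀ x, Summable fun n => fM n x := fun x =>
    Summable.of_norm_bounded (hgeo.mul_left _) (hbfM · x)
  have hsumN : ∀ x, Summable fun n => fN n x := fun x =>
    Summable.of_norm_bounded (hgeo.mul_left _) (hbfN · x)
  have hcfM : ∀ n, Continuous (fM n) := by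
    intro n
    exact (T.continuous.iterate n).comp (P.continuous.comp (hgc.comp
      ((S.symm.continuous.iterate (n+1)))))
  have hcfN : ∀ n, Continuous (fN n) := by
    intro n
    exact (T.symm.continuous.iterate (n+1)).comp (Q.continuous.comp (hgc.comp
      ((S.continuous.iterate n))))
  set h : X → X := fun x => (∑' n, fN n x) - (∑' n, fM n x) with hhdef
  have hhc : Continuous h := by
    apply Continuous.sub
    · exact continuous_tsum hcfN (hgeo.mul_left _) hbfN
    · exact continuous_tsum hcfM (hgeo.mul_left _) hbfM
  -- norm bound
  have hbound : ∀ x, ‖h x‖ < ε := by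
    intro x
    have hM' : ‖∑' n, fM n x‖ ≤ (c * (‖P‖ * δ)) * (1 - t)⁻¹ := by
      have := tsum_of_norm_bounded ((hgeo.mul_left (c * (‖P‖ * δ))).hasSum) (hbfM · x)
      calc ‖∑' n, fM n x‖ ≤ ∑' n, (c * (‖P‖ * δ)) * t ^ n := this
        _ = (c * (‖P‖ * δ)) * (1 - t)⁻¹ := by
            rw [tsum_mul_left, tsum_geometric_of_lt_one ht.1.le ht.2]
    have hN' : ‖∑' n, fN n x‖ ≤ (c * (‖Q‖ * δ)) * (1 - t)⁻¹ := by
      have := tsum_of_norm_bounded ((hgeo.mul_left (c * (‖Q‖ * δ))).hasSum) (hbfN · x)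
      calc ‖∑' n, fN n x‖ ≤ ∑' n, (c * (‖Q‖ * δ)) * t ^ n := this
        _ = (c * (‖Q‖ * δ)) * (1 - t)⁻¹ := by
            rw [tsum_mul_left, tsum_geometric_of_lt_one ht.1.le ht.2]
    have htri : ‖h x‖ ≤ (c * (‖Q‖ * δ)) * (1 - t)⁻¹ + (c * (‖P‖ * δ)) * (1 - t)⁻¹ :=
      (norm_sub_le _ _).trans (add_le_add hN' hM')
    have hkey : c * δ * (1 - t)⁻¹ = ε / (2 * A) := by
      rw [hδdef]; field_simp
    have hPQA : ‖P‖ + ‖Q‖ ≤ A := by rw [hAdef]; linarith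
    have h2 : (c * (‖Q‖ * δ)) * (1 - t)⁻¹ + (c * (‖P‖ * δ)) * (1 - t)⁻¹
        = (c * δ * (1 - t)⁻¹) * (‖P‖ + ‖Q‖) := by ring
    rw [h2, hkey] at htri
    have : ε / (2 * A) * (‖P‖ + ‖Q‖) ≤ ε / (2 * A) * A :=
      mul_le_mul_of_nonneg_left hPQA (by positivity)
    have hεA : ε / (2 * A) * A = ε / 2 := by field_simp
    calc ‖h x‖ ≤ ε / (2 * A) * (‖P‖ + ‖Q‖) := htri
      _ ≤ ε / 2 := by rw [← hεA]; exact this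
      _ < ε := by linarith
  have hTlin : ∀ y : X, T y = (T : X →L[𝕂] X) y := fun y => rfl
  have e1 : ∀ n (x : X), T (fN n x) = (⇑T.symm)^[n] (Q (g ((⇑S)^[n] x))) := by
    intro n x
    show T ((⇑T.symm)^[n+1] (Q (g ((⇑S)^[n] x)))) = (⇑T.symm)^[n] (Q (g ((⇑S)^[n] x)))
    rw [Function.iterate_succ_apply']
    exact T.apply_symm_apply _
  have e2 : ∀ n (x : X), T (fM n x) = fM (n+1) (S x) := by
    intro n x
    have hx : (⇑S.symm)^[n+1+1] (S x) = (⇑S.symm)^[n+1] x := by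
      rw [Function.iterate_succ_apply]
      congr 1
      exact S.symm_apply_apply x
    show T ((⇑T)^[n] (P (g ((⇑S.symm)^[n+1] x))))
        = (⇑T)^[n+1] (P (g ((⇑S.symm)^[n+1+1] (S x))))
    rw [hx]
    exact (Function.iterate_succ_apply' (⇑T) n _).symm
  have e3 : ∀ n (x : X), fN n (S x) = (⇑T.symm)^[n+1] (Q (g ((⇑S)^[n+1] x))) := by
    intro n x
    show (⇑T.symm)^[n+1] (Q (g ((⇑S)^[n] (S x)))) = (⇑T.symm)^[n+1] (Q (g ((⇑S)^[n+1] x)))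
    rw [← Function.iterate_succ_apply (⇑S) n x]
  have hTh : ∀ x, T (h x) = g x + h (S x) := by
    intro x
    have hsum' : Summable fun n => (⇑T.symm)^[n] (Q (g ((⇑S)^[n] x))) := by
      refine Summable.of_norm_bounded (hgeo.mul_left (c * (‖Q‖ * δ))) (fun n => ?_)
      have h1 := hbN (Q (g ((⇑S)^[n] x))) (hQmem _) n
      have h2 : ‖Q (g ((⇑S)^[n] x))‖ ≤ ‖Q‖ * δ :=
        (Q.le_opNorm _).trans (mul_le_mul_of_nonneg_left (hg _) (norm_nonneg _))
      have h3 : (0:ℝ) ≤ c * t ^ n := le_of_lt (mul_pos hc (pow_pos ht.1 n))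
      calc ‖(⇑T.symm)^[n] (Q (g ((⇑S)^[n] x)))‖ ≤ c * t ^ n * ‖Q (g ((⇑S)^[n] x))‖ := h1
        _ ≤ c * t ^ n * (‖Q‖ * δ) := mul_le_mul_of_nonneg_left h2 h3
        _ = (c * (‖Q‖ * δ)) * t ^ n := by ring
    have sN : T (∑' n, fN n x) = Q (g x) + ∑' n, fN n (S x) := by
      rw [hTlin, ContinuousLinearMap.map_tsum _ (hsumN x)]
      have heq : (fun n => (T : X →L[𝕂] X) (fN n x))
          = fun n => (⇑T.symm)^[n] (Q (g ((⇑S)^[n] x))) := by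
        funext n; exact e1 n x
      have h0 : (⇑T.symm)^[0] (Q (g ((⇑S)^[0] x))) = Q (g x) := by simp
      rw [heq, hsum'.tsum_eq_zero_add, h0]
      congr 1
    have sM : T (∑' n, fM n x) = (∑' n, fM n (S x)) - fM 0 (S x) := by
      rw [hTlin, ContinuousLinearMap.map_tsum _ (hsumM x)]
      have heq : (fun n => (T : X →L[𝕂] X) (fM n x)) = fun n => fM (n+1) (S x) := by
        funext n; exact e2 n x
      rw [heq, (hsumM (S x)).tsum_eq_zero_add]
      abel
    have hfM0 : fM 0 (S x) = P (g x) := by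
      show (⇑T)^[0] (P (g ((⇑S.symm)^[0+1] (S x)))) = P (g x)
      simp
    have hgx : P (g x) + Q (g x) = g x := hPQ _
    show T ((∑' n, fN n x) - (∑' n, fM n x)) = g x + h (S x)
    rw [map_sub, sN, sM, hfM0]
    have hrear : Q (g x) + (∑' n, fN n (S x)) - ((∑' n, fM n (S x)) - P (g x))
        = (P (g x) + Q (g x)) + ((∑' n, fN n (S x)) - (∑' n, fM n (S x))) := by abel
    rw [hrear, hgx]
  refine ⟨fun x => x + h x, continuous_id.add hhc, ?_, by simpa using hbound⟩
  intro x
  calc T (x + h x) = T x + T (h x) := map_add T x (h x)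
    _ = T x + ((S x - T x) + h (S x)) := by rw [hTh x]
    _ = S x + h (S x) := by abel
end
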